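/- Let a ∈ ℝ with |a| > 1, λ ∈ ℂ with |λ| ≥ 1, and let f, g : ℝ → ℂ with f continuous tending to 0 at ±∞ and g rapidly decreasing (|g(y)| ≤ C/(1+y²) for some C). If f(a·x) = λ·f(x) + g(x) for all x, then f(x) = -(1/λ)·∑_{k=0}^∞ λ^{-k}·g(aᵏ·x) for every x ≠ 0. -/

import Mathlib

theorem stmt_19 (a : ℝ) (ha : 1 < |a|) (l : ℂ) (hl : 1 ≤ ‖l‖)
    (f g : ℝ → ℂ) (hf : Continuous f)
    (hvan : Filter.Tendsto f (Filter.cocompact ℝ) (nhds 0))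
    (C : ℝ) (hg : ∀ y : ℝ, ‖g y‖ ≤ C / (1 + y ^ 2))
    (heq : ∀ x : ℝ, f (a * x) = l * f x + g x) :
    ∀ x : ℝ, x ≠ 0 → f x = -(1 / l) * ∑' k : ℕ, (1 / l) ^ k * g (a ^ k * x) := by
  intro x hx
  have hl0 : l ≠ 0 := by
    intro h; rw [h, norm_zero] at hl; norm_num at hl
  have hC : 0 ≤ C := by nlinarith [hg 0, norm_nonneg (g 0)]
  have ha2 : 1 < a ^ 2 := by
    have := sq_abs a
    nlinarith [sq_nonneg (|a| - 1)]
  have hx2 : 0 < x ^ 2 := by positivity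
  -- summability
  have hbound : ∀ k : ℕ, ‖(1 / l) ^ k * g (a ^ k * x)‖ ≤ (C / x ^ 2) * (1 / a ^ 2) ^ k := by
    intro k
    have h1 : ‖(1 / l : ℂ)‖ ≤ 1 := by
      rw [norm_div, norm_one, div_le_one (lt_of_lt_of_le one_pos hl)]; exact hl
    have h2 : ‖(1 / l : ℂ) ^ k‖ ≤ 1 := by
      rw [norm_pow]; exact pow_le_one₀ (norm_nonneg _) h1
    have h3 : ‖g (a ^ k * x)‖ ≤ C / (1 + (a ^ k * x) ^ 2) := hg _
    have h4 : (a ^ 2) ^ k * x ^ 2 ≤ 1 + (a ^ k * x) ^ 2 := by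
      rw [mul_pow, ← pow_mul, ← pow_mul, mul_comm 2 k]; linarith
    have hpos : (0:ℝ) < (a ^ 2) ^ k * x ^ 2 := by positivity
    calc ‖(1 / l) ^ k * g (a ^ k * x)‖ = ‖(1 / l : ℂ) ^ k‖ * ‖g (a ^ k * x)‖ := norm_mul _ _
      _ ≤ 1 * (C / (1 + (a ^ k * x) ^ 2)) := by
          exact mul_le_mul h2 h3 (norm_nonneg _) zero_le_one
      _ ≤ C / ((a ^ 2) ^ k * x ^ 2) := by
          rw [one_mul]
          exact div_le_div_of_nonneg_left hC hpos h4
      _ = (C / x ^ 2) * (1 / a ^ 2) ^ k := by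
          rw [div_pow, one_pow, div_mul_div_comm, mul_one, mul_comm (x ^ 2) ((a ^ 2) ^ k)]
  have hsum : Summable fun k : ℕ => (1 / l) ^ k * g (a ^ k * x) := by
    apply Summable.of_norm_bounded (Summable.mul_left _ ?_) hbound
    apply summable_geometric_of_lt_one (by positivity)
    rw [div_lt_one (by linarith)]; linarith
  -- key identity
  have key : ∀ n : ℕ, f x = (1 / l) ^ n * f (a ^ n * x)
      - ∑ k ∈ Finset.range n, (1 / l) ^ (k + 1) * g (a ^ k * x) := by
    intro n
    induction n with
    | zero => simp
    | succ n ih =>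
      have step : f (a ^ (n + 1) * x) = l * f (a ^ n * x) + g (a ^ n * x) := by
        have := heq (a ^ n * x)
        rw [← mul_assoc, ← pow_succ'] at this
        exact this
      rw [Finset.sum_range_succ, step, ih]
      have hcanc : (1 / l) ^ (n + 1) * l = (1 / l) ^ n := by
        rw [pow_succ, mul_assoc, one_div, inv_mul_cancel₀ hl0, mul_one]
      linear_combination (-(f (a ^ n * x))) * hcanc
  -- limits
  have hcomp : Filter.Tendsto (fun n : ℕ => a ^ n * x) Filter.atTop (Filter.cocompact ℝ) := by
    apply tendsto_cocompact_of_tendsto_dist_comp_atTop (0 : ℝ)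
    simp only [Real.dist_eq, sub_zero, abs_mul, abs_pow]
    exact (tendsto_pow_atTop_atTop_of_one_lt ha).atTop_mul_const (abs_pos.mpr hx)
  have T1 : Filter.Tendsto (fun n : ℕ => (1 / l) ^ n * f (a ^ n * x)) Filter.atTop (nhds 0) := by
    refine squeeze_zero_norm (f := fun n : ℕ => (1 / l) ^ n * f (a ^ n * x)) (a := fun n : ℕ => ‖f (a ^ n * x)‖) ?_ ?_
    · intro n
      rw [norm_mul, norm_pow]
      have : ‖(1 / l : ℂ)‖ ≤ 1 := by
        rw [norm_div, norm_one, div_le_one (lt_of_lt_of_le one_pos hl)]; exact hl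
      calc ‖(1/l:ℂ)‖ ^ n * ‖f (a ^ n * x)‖ ≤ 1 * ‖f (a ^ n * x)‖ :=
            mul_le_mul_of_nonneg_right (pow_le_one₀ (norm_nonneg _) this) (norm_nonneg _)
        _ = ‖f (a ^ n * x)‖ := one_mul _
    · simpa using (hvan.comp hcomp).norm
  have hsum' : Summable fun k : ℕ => (1 / l) ^ (k + 1) * g (a ^ k * x) := by
    simpa [pow_succ', mul_assoc] using hsum.mul_left (1 / l)
  have T2 : Filter.Tendsto
      (fun n : ℕ => ∑ k ∈ Finset.range n, (1 / l) ^ (k + 1) * g (a ^ k * x))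
      Filter.atTop (nhds (∑' k : ℕ, (1 / l) ^ (k + 1) * g (a ^ k * x))) :=
    hsum'.hasSum.tendsto_sum_nat
  have := tendsto_nhds_unique (tendsto_const_nhds)
    ((T1.sub T2).congr (fun n => (key n).symm))
  rw [this, zero_sub]
  have : (∑' k : ℕ, (1 / l) ^ (k + 1) * g (a ^ k * x))
      = (1 / l) * ∑' k : ℕ, (1 / l) ^ k * g (a ^ k * x) := by
    rw [← tsum_mul_left]
    congr 1; funext k; rw [pow_succ']; ring
  rw [this]; ring
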